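/- Let V : [0,∞) → ℝ be a nonnegative differentiable function satisfying V'(t) ≤ -a₁·V(t)^{b₁} - a₂·V(t)^{b₂} whenever V(t) > 0, where a₁, a₂ > 0, b₁ > 1, and 0 < b₂ < 1. Then V(t) = 0 for all t ≥ 1/(a₁(b₁-1)) + 1/(a₂(1-b₂)). -/
import Mathlib


/-- PT CLF differential inequality: `V' ≤ -a₁ V^{b₁} - a₂ V^{b₂}` with `b₁ > 1`,
`0 < b₂ < 1` forces `V = 0` after time `1/(a₁(b₁-1)) + 1/(a₂(1-b₂))`. -/
theorem prescribed_time_stability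
    (V : ℝ → ℝ) (hV : Differentiable ℝ V)
    (hnn : ∀ t, 0 ≤ t → 0 ≤ V t)
    (a₁ a₂ b₁ b₂ : ℝ) (ha₁ : 0 < a₁) (ha₂ : 0 < a₂)
    (hb₁ : 1 < b₁) (hb₂0 : 0 < b₂) (hb₂1 : b₂ < 1)
    (hineq : ∀ t, 0 ≤ t → 0 < V t →
      deriv V t ≤ -a₁ * V t ^ b₁ - a₂ * V t ^ b₂) :
    ∀ t, 1 / (a₁ * (b₁ - 1)) + 1 / (a₂ * (1 - b₂)) ≤ t → V t = 0 := by
  have hc₁ : 0 < a₁ * (b₁ - 1) := mul_pos ha₁ (by linarith)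
  have hc₂ : 0 < a₂ * (1 - b₂) := mul_pos ha₂ (by linarith)
  set c₁ := a₁ * (b₁ - 1) with hc₁def
  set c₂ := a₂ * (1 - b₂) with hc₂def
  set T₁ := 1 / c₁ with hT₁def
  set T₂ := 1 / c₂ with hT₂def
  have hT₁pos : 0 < T₁ := by positivity
  have hT₂pos : 0 < T₂ := by positivity
  set T := T₁ + T₂ with hTdef
  have hTpos : 0 < T := by positivity
  -- V is antitone on [0,∞)
  have hanti : AntitoneOn V (Set.Ici (0:ℝ)) := by
    apply antitoneOn_of_deriv_nonpos (convex_Ici 0) hV.continuous.continuousOn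
      hV.differentiableOn
    intro t ht
    rw [interior_Ici] at ht
    rcases (hnn t ht.le).lt_or_eq with hpos | hzero
    · have := hineq t ht.le hpos
      have h1 : 0 < V t ^ b₁ := Real.rpow_pos_of_pos hpos _
      have h2 : 0 < V t ^ b₂ := Real.rpow_pos_of_pos hpos _
      nlinarith
    · have hmin : IsLocalMin V t := by
        filter_upwards [eventually_gt_nhds ht] with s hs
        exact hzero ▸ hnn s hs.le
      exact le_of_eq hmin.deriv_eq_zero
  -- key: V vanishes somewhere on [0, T]
  have hzero : ∃ s ∈ Set.Icc (0:ℝ) T, V s = 0 := by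
    by_contra hcon
    push_neg at hcon
    have hpos : ∀ s ∈ Set.Icc (0:ℝ) T, 0 < V s := fun s hs =>
      (hnn s hs.1).lt_of_ne' (hcon s hs)
    -- Phase 1: g t = V t ^ (1 - b₁) - t * c₁ is monotone on [0, T₁]
    have hT₁T : Set.Icc (0:ℝ) T₁ ⊆ Set.Icc (0:ℝ) T := by
      apply Set.Icc_subset_Icc le_rfl; linarith
    have hg : ∀ x ∈ Set.Icc (0:ℝ) T, HasDerivAt (fun t => V t ^ (1 - b₁) - t * c₁)
        (deriv V x * (1 - b₁) * V x ^ (1 - b₁ - 1) - c₁) x := by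
      intro x hx
      exact (((hV x).hasDerivAt.rpow_const (Or.inl (hpos x hx).ne')).sub
        (hasDerivAt_mul_const c₁))
    have hgmono : MonotoneOn (fun t => V t ^ (1 - b₁) - t * c₁) (Set.Icc 0 T₁) := by
      apply monotoneOn_of_deriv_nonneg (convex_Icc 0 T₁)
      · exact fun x hx => ((hg x (hT₁T hx)).continuousAt).continuousWithinAt
      · intro x hx
        rw [interior_Icc] at hx
        exact ((hg x (hT₁T ⟨hx.1.le, hx.2.le⟩)).differentiableAt).differentiableWithinAt
      · intro x hx
        rw [interior_Icc] at hx
        have hxI : x ∈ Set.Icc (0:ℝ) T := hT₁T ⟨hx.1.le, hx.2.le⟩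
        rw [(hg x hxI).deriv]
        set y := V x with hy
        have hy0 : 0 < y := hpos x hxI
        have hd := hineq x hxI.1 hy0
        have h1 : y ^ (1 - b₁ - 1) * y ^ b₁ = 1 := by
          rw [← Real.rpow_add hy0]
          norm_num
        have h2 : 0 < y ^ (1 - b₁ - 1) := Real.rpow_pos_of_pos hy0 _
        have h3 : 0 < y ^ b₂ := Real.rpow_pos_of_pos hy0 _
        have h4 : y ^ (1 - b₁ - 1) * deriv V x ≤
            y ^ (1 - b₁ - 1) * (-a₁ * y ^ b₁ - a₂ * y ^ b₂) :=
          mul_le_mul_of_nonneg_left hd h2.le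
        have h5 : 0 < y ^ (1 - b₁ - 1) * y ^ b₂ := mul_pos h2 h3
        have e1 : y ^ (1 - b₁ - 1) * (-a₁ * y ^ b₁ - a₂ * y ^ b₂)
            = -a₁ - a₂ * (y ^ (1 - b₁ - 1) * y ^ b₂) := by
          linear_combination (-a₁) * h1
        rw [e1] at h4
        have h6 := mul_le_mul_of_nonpos_left h4 (by linarith : (1 - b₁ : ℝ) ≤ 0)
        have h7 : 0 ≤ (b₁ - 1) * a₂ * (y ^ (1 - b₁ - 1) * y ^ b₂) :=
          mul_nonneg (mul_nonneg (by linarith) ha₂.le) h5.le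
        nlinarith [h6, h7]
    have hVT₁ : V T₁ ≤ 1 := by
      by_contra hgt
      push_neg at hgt
      have hle := hgmono (Set.left_mem_Icc.2 hT₁pos.le) (Set.right_mem_Icc.2 hT₁pos.le)
        hT₁pos.le
      simp only at hle
      have hV0 : 0 < V 0 ^ (1 - b₁) :=
        Real.rpow_pos_of_pos (hpos 0 ⟨le_rfl, hTpos.le⟩) _
      have hT₁c₁ : T₁ * c₁ = 1 := by
        rw [hT₁def]; field_simp
      have hlt : V T₁ ^ (1 - b₁) < 1 :=
        Real.rpow_lt_one_of_one_lt_of_neg hgt (by linarith)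
      nlinarith
    -- Phase 2: h t = V t ^ (1 - b₂) + t * c₂ is antitone on [T₁, T]
    have hh : ∀ x ∈ Set.Icc (0:ℝ) T, HasDerivAt (fun t => V t ^ (1 - b₂) + t * c₂)
        (deriv V x * (1 - b₂) * V x ^ (1 - b₂ - 1) + c₂) x := by
      intro x hx
      exact (((hV x).hasDerivAt.rpow_const (Or.inl (hpos x hx).ne')).add
        (hasDerivAt_mul_const c₂))
    have hT₁TI : Set.Icc T₁ T ⊆ Set.Icc (0:ℝ) T :=
      Set.Icc_subset_Icc hT₁pos.le le_rfl
    have hhanti : AntitoneOn (fun t => V t ^ (1 - b₂) + t * c₂) (Set.Icc T₁ T) := by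
      apply antitoneOn_of_deriv_nonpos (convex_Icc T₁ T)
      · exact fun x hx => ((hh x (hT₁TI hx)).continuousAt).continuousWithinAt
      · intro x hx
        rw [interior_Icc] at hx
        exact ((hh x (hT₁TI ⟨hx.1.le, hx.2.le⟩)).differentiableAt).differentiableWithinAt
      · intro x hx
        rw [interior_Icc] at hx
        have hxI : x ∈ Set.Icc (0:ℝ) T := hT₁TI ⟨hx.1.le, hx.2.le⟩
        rw [(hh x hxI).deriv]
        set y := V x with hy
        have hy0 : 0 < y := hpos x hxI
        have hd := hineq x hxI.1 hy0
        have h1 : y ^ (1 - b₂ - 1) * y ^ b₂ = 1 := by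
          rw [← Real.rpow_add hy0]
          norm_num
        have h2 : 0 < y ^ (1 - b₂ - 1) := Real.rpow_pos_of_pos hy0 _
        have h3 : 0 < y ^ b₁ := Real.rpow_pos_of_pos hy0 _
        have h4 : y ^ (1 - b₂ - 1) * deriv V x ≤
            y ^ (1 - b₂ - 1) * (-a₁ * y ^ b₁ - a₂ * y ^ b₂) :=
          mul_le_mul_of_nonneg_left hd h2.le
        have h5 : 0 < y ^ (1 - b₂ - 1) * y ^ b₁ := mul_pos h2 h3
        have e1 : y ^ (1 - b₂ - 1) * (-a₁ * y ^ b₁ - a₂ * y ^ b₂)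
            = -a₁ * (y ^ (1 - b₂ - 1) * y ^ b₁) - a₂ := by
          linear_combination (-a₂) * h1
        rw [e1] at h4
        have h6 := mul_le_mul_of_nonneg_left h4 (by linarith : (0:ℝ) ≤ 1 - b₂)
        have h7 : 0 ≤ (1 - b₂) * a₁ * (y ^ (1 - b₂ - 1) * y ^ b₁) :=
          mul_nonneg (mul_nonneg (by linarith) ha₁.le) h5.le
        nlinarith [h6, h7]
    have hT₁memT : T₁ ∈ Set.Icc T₁ T := Set.left_mem_Icc.2 (by linarith)
    have hTmem : T ∈ Set.Icc T₁ T := Set.right_mem_Icc.2 (by linarith)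
    have hle := hhanti hT₁memT hTmem (by linarith)
    simp only at hle
    have hT₂c₂ : T₂ * c₂ = 1 := by
      rw [hT₂def]; field_simp
    have hVT₁p : V T₁ ^ (1 - b₂) ≤ 1 :=
      Real.rpow_le_one (hnn T₁ hT₁pos.le) hVT₁ (by linarith)
    have hVTp : 0 < V T ^ (1 - b₂) :=
      Real.rpow_pos_of_pos (hpos T ⟨hTpos.le, le_rfl⟩) _
    have hTeq : T * c₂ = T₁ * c₂ + 1 := by
      rw [hTdef, add_mul, hT₂c₂]
    nlinarith
  obtain ⟨s, hs, hVs⟩ := hzero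
  intro t ht
  have hst : s ≤ t := le_trans hs.2 ht
  have h1 : V t ≤ V s := hanti hs.1 (le_trans hs.1 hst) hst
  have h2 : 0 ≤ V t := hnn t (le_trans hs.1 hst)
  linarith [hVs ▸ h1]
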